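/- Let G be a finite simple graph with vertex set V and edge set E, let G' be the 3-subdivision of G (each edge {u, v} replaced by a path u – x_e – y_e – v through two new vertices), and let G* be the disjoint union of two copies of G'. Then, for every κ ∈ ℕ, G has a vertex cover of size at most κ if and only if G* has a vertex cover of size at most 2·(κ + |E|). -/

import Mathlib

/-- A vertex cover of a simple graph: a set of vertices containing at least one
endpoint of every edge. -/
def SimpleGraph.IsVertexCoverFinset {V : Type*} (G : SimpleGraph V) (C : Finset V) : Prop :=
  ∀ ⦃u v : V⦄, G.Adj u v → u ∈ C ∨ v ∈ C

/-- The 3-subdivision of `G`: each edge `e`, with chosen ordered endpoints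
`(fst e, snd e)`, is replaced by the path `fst e – (e,false) – (e,true) – snd e`. -/
def SimpleGraph.subdivision3 {V : Type*} (G : SimpleGraph V) (fst snd : G.edgeSet → V) :
    SimpleGraph (V ⊕ (G.edgeSet × Bool)) :=
  SimpleGraph.fromRel (fun x y =>
    ∃ e : G.edgeSet,
      (x = Sum.inl (fst e) ∧ y = Sum.inr (e, false)) ∨
      (x = Sum.inr (e, false) ∧ y = Sum.inr (e, true)) ∨
      (x = Sum.inr (e, true) ∧ y = Sum.inl (snd e)))

lemma adj_endpoints {V : Type*} (G : SimpleGraph V) (fst snd : G.edgeSet → V)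
    (hends : ∀ e : G.edgeSet, (e : Sym2 V) = s(fst e, snd e)) (e : G.edgeSet) :
    G.Adj (fst e) (snd e) := by
  have := e.2
  rw [hends e] at this
  exact this

lemma sub_forward {V : Type*} [Fintype V] [DecidableEq V] (G : SimpleGraph V)
    [Fintype G.edgeSet] (fst snd : G.edgeSet → V)
    (hends : ∀ e : G.edgeSet, (e : Sym2 V) = s(fst e, snd e))
    {C : Finset V} (hC : G.IsVertexCoverFinset C) :
    ∃ D : Finset (V ⊕ (G.edgeSet × Bool)),
      D.card ≤ C.card + Fintype.card G.edgeSet ∧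
      (G.subdivision3 fst snd).IsVertexCoverFinset D := by
  classical
  refine ⟨C.image Sum.inl ∪ (Finset.univ : Finset G.edgeSet).image
      (fun e => Sum.inr (e, if fst e ∈ C then true else false)), ?_, ?_⟩
  · calc _ ≤ (C.image Sum.inl).card + ((Finset.univ : Finset G.edgeSet).image _).card :=
          Finset.card_union_le _ _
      _ ≤ C.card + Fintype.card G.edgeSet := by
          gcongr <;> [exact Finset.card_image_le; exact Finset.card_image_le.trans (by simp)]
  · rintro x y hxy
    obtain ⟨hne, h | h⟩ := hxy
    all_goals {
      obtain ⟨e, (⟨hx, hy⟩ | ⟨hx, hy⟩ | ⟨hx, hy⟩)⟩ := h <;> subst hx <;> subst hy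
      · by_cases hf : fst e ∈ C
        · simp [hf]
        · have hs : snd e ∈ C := (hC (adj_endpoints G fst snd hends e)).resolve_left hf
          simp [hf]
      · by_cases hf : fst e ∈ C <;> simp [hf]
      · by_cases hf : fst e ∈ C
        · simp [hf]
        · have hs : snd e ∈ C := (hC (adj_endpoints G fst snd hends e)).resolve_left hf
          simp [hf, hs] }

lemma sub_backward {V : Type*} [Fintype V] [DecidableEq V] (G : SimpleGraph V)
    [Fintype G.edgeSet] (fst snd : G.edgeSet → V)
    (hends : ∀ e : G.edgeSet, (e : Sym2 V) = s(fst e, snd e))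
    {D : Finset (V ⊕ (G.edgeSet × Bool))}
    (hD : (G.subdivision3 fst snd).IsVertexCoverFinset D) :
    ∃ C : Finset V, C.card + Fintype.card G.edgeSet ≤ D.card ∧
      G.IsVertexCoverFinset C := by
  classical
  set A : Finset V := D.toLeft with hA
  set S : Finset (G.edgeSet × Bool) := D.toRight with hS
  set bad : Finset G.edgeSet :=
    Finset.univ.filter (fun e => Sum.inl (fst e) ∉ D ∧ Sum.inl (snd e) ∉ D) with hbad
  have hmid : ∀ e : G.edgeSet, (e, false) ∈ S ∨ (e, true) ∈ S := by
    intro e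
    have hadj : (G.subdivision3 fst snd).Adj (Sum.inr (e, false)) (Sum.inr (e, true)) := by
      refine ⟨by simp, Or.inl ⟨e, Or.inr (Or.inl ⟨rfl, rfl⟩)⟩⟩
    simpa [hS] using hD hadj
  have hbad2 : ∀ e ∈ bad, (e, false) ∈ S ∧ (e, true) ∈ S := by
    intro e he
    simp only [hbad, Finset.mem_filter, Finset.mem_univ, true_and] at he
    constructor
    · have hadj : (G.subdivision3 fst snd).Adj (Sum.inl (fst e)) (Sum.inr (e, false)) := by
        refine ⟨by simp, Or.inl ⟨e, Or.inl ⟨rfl, rfl⟩⟩⟩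
      have := hD hadj
      simpa [hS, he.1] using this
    · have hadj : (G.subdivision3 fst snd).Adj (Sum.inr (e, true)) (Sum.inl (snd e)) := by
        refine ⟨by simp, Or.inl ⟨e, Or.inr (Or.inr ⟨rfl, rfl⟩)⟩⟩
      have := hD hadj
      simpa [hS, he.2] using this
  have hfiber : S.card = ∑ e : G.edgeSet, (S.filter (fun p => p.1 = e)).card :=
    Finset.card_eq_sum_card_fiberwise (fun p _ => Finset.mem_univ p.1)
  have hge : ∀ e : G.edgeSet,
      (if e ∈ bad then 2 else 1) ≤ (S.filter (fun p => p.1 = e)).card := by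
    intro e
    by_cases he : e ∈ bad
    · have h2 := hbad2 e he
      have hsub : ({(e, false), (e, true)} : Finset (G.edgeSet × Bool)) ⊆
          S.filter (fun p => p.1 = e) := by
        intro p hp
        simp only [Finset.mem_insert, Finset.mem_singleton] at hp
        rcases hp with rfl | rfl <;> simp [h2.1, h2.2]
      have := Finset.card_le_card hsub
      simpa [he] using this
    · rcases hmid e with h | h
      · have : (e, false) ∈ S.filter (fun p => p.1 = e) := by simp [h]
        simpa [he] using Finset.card_pos.mpr ⟨_, this⟩
      · have : (e, true) ∈ S.filter (fun p => p.1 = e) := by simp [h]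
        simpa [he] using Finset.card_pos.mpr ⟨_, this⟩
  have hScard : Fintype.card G.edgeSet + bad.card ≤ S.card := by
    have h1 : ∑ e : G.edgeSet, (if e ∈ bad then 2 else 1) ≤ S.card := by
      rw [hfiber]; exact Finset.sum_le_sum (fun e _ => hge e)
    have h2 : ∑ e : G.edgeSet, (if e ∈ bad then 2 else 1)
        = Fintype.card G.edgeSet + bad.card := by
      have : ∀ e : G.edgeSet, (if e ∈ bad then 2 else 1)
          = 1 + (if e ∈ bad then 1 else 0) := by
        intro e; by_cases he : e ∈ bad <;> simp [he]
      rw [Finset.sum_congr rfl (fun e _ => this e), Finset.sum_add_distrib,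
        Finset.sum_ite_mem, Finset.univ_inter, Finset.sum_const, Finset.sum_const,
        smul_eq_mul, smul_eq_mul, mul_one, mul_one, Fintype.card]
    omega
  refine ⟨A ∪ bad.image fst, ?_, ?_⟩
  · have hu := Finset.card_union_le A (bad.image fst)
    have hi := Finset.card_image_le (s := bad) (f := fst)
    have ht : A.card + S.card = D.card := Finset.card_toLeft_add_card_toRight
    omega
  · intro u v huv
    have hends' : s(u, v) = s(fst ⟨s(u,v), huv⟩, snd ⟨s(u,v), huv⟩) := hends ⟨s(u,v), huv⟩
    rw [Sym2.eq_iff] at hends'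
    by_cases h1 : Sum.inl (fst ⟨s(u,v), huv⟩) ∈ D
    · have hm : fst ⟨s(u,v), huv⟩ ∈ A ∪ bad.image fst :=
        Finset.mem_union_left _ (by simp [hA, h1])
      rcases hends' with ⟨h', _⟩ | ⟨_, h'⟩
      · exact Or.inl (h' ▸ hm)
      · exact Or.inr (h' ▸ hm)
    by_cases h2 : Sum.inl (snd ⟨s(u,v), huv⟩) ∈ D
    · have hm : snd ⟨s(u,v), huv⟩ ∈ A ∪ bad.image fst :=
        Finset.mem_union_left _ (by simp [hA, h2])
      rcases hends' with ⟨_, h'⟩ | ⟨h', _⟩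
      · exact Or.inr (h' ▸ hm)
      · exact Or.inl (h' ▸ hm)
    · have hb : (⟨s(u,v), huv⟩ : G.edgeSet) ∈ bad := by simp [hbad, h1, h2]
      have hm : fst ⟨s(u,v), huv⟩ ∈ A ∪ bad.image fst :=
        Finset.mem_union_right _ (Finset.mem_image_of_mem _ hb)
      rcases hends' with ⟨h', _⟩ | ⟨_, h'⟩
      · exact Or.inl (h' ▸ hm)
      · exact Or.inr (h' ▸ hm)

/-- `G` has a vertex cover of size at most `κ` if and only if the disjoint
union of two copies of the 3-subdivision of `G` has a vertex cover of size at most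
`2·(κ + |E|)`. -/
theorem vertexCover_two_copies_subdivision3 {V : Type*} [Fintype V] [DecidableEq V]
    (G : SimpleGraph V) [Fintype G.edgeSet]
    (fst snd : G.edgeSet → V)
    (hends : ∀ e : G.edgeSet, (e : Sym2 V) = s(fst e, snd e))
    (κ : ℕ) :
    (∃ C : Finset V, C.card ≤ κ ∧ G.IsVertexCoverFinset C) ↔
    (∃ Cstar : Finset ((V ⊕ (G.edgeSet × Bool)) ⊕ (V ⊕ (G.edgeSet × Bool))),
      Cstar.card ≤ 2 * (κ + Fintype.card G.edgeSet) ∧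
      ((G.subdivision3 fst snd) ⊕g (G.subdivision3 fst snd)).IsVertexCoverFinset Cstar) := by
  classical
  constructor
  · rintro ⟨C, hCcard, hC⟩
    obtain ⟨D, hDcard, hD⟩ := sub_forward G fst snd hends hC
    refine ⟨D.map ⟨Sum.inl, Sum.inl_injective⟩ ∪ D.map ⟨Sum.inr, Sum.inr_injective⟩, ?_, ?_⟩
    · calc _ ≤ (D.map ⟨Sum.inl, Sum.inl_injective⟩).card
            + (D.map ⟨Sum.inr, Sum.inr_injective⟩).card := Finset.card_union_le _ _
        _ = D.card + D.card := by simp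
        _ ≤ 2 * (κ + Fintype.card G.edgeSet) := by omega
    · rintro (x | x) (y | y) hxy <;> simp only [SimpleGraph.sum_adj] at hxy
      · rcases hD hxy with h | h
        · exact Or.inl (by simp [h])
        · exact Or.inr (by simp [h])
      · rcases hD hxy with h | h
        · exact Or.inl (by simp [h])
        · exact Or.inr (by simp [h])
  · rintro ⟨Cstar, hcard, hcov⟩
    have hsum : Cstar.toLeft.card + Cstar.toRight.card = Cstar.card :=
      Finset.card_toLeft_add_card_toRight
    have hL : (G.subdivision3 fst snd).IsVertexCoverFinset Cstar.toLeft := by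
      intro u v huv
      have : ((G.subdivision3 fst snd) ⊕g (G.subdivision3 fst snd)).Adj
          (Sum.inl u) (Sum.inl v) := huv
      rcases hcov this with h | h
      · exact Or.inl (Finset.mem_toLeft.mpr h)
      · exact Or.inr (Finset.mem_toLeft.mpr h)
    have hR : (G.subdivision3 fst snd).IsVertexCoverFinset Cstar.toRight := by
      intro u v huv
      have : ((G.subdivision3 fst snd) ⊕g (G.subdivision3 fst snd)).Adj
          (Sum.inr u) (Sum.inr v) := huv
      rcases hcov this with h | h
      · exact Or.inl (Finset.mem_toRight.mpr h)
      · exact Or.inr (Finset.mem_toRight.mpr h)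
    by_cases hle : Cstar.toLeft.card ≤ κ + Fintype.card G.edgeSet
    · obtain ⟨C, hCle, hC⟩ := sub_backward G fst snd hends hL
      exact ⟨C, by omega, hC⟩
    · obtain ⟨C, hCle, hC⟩ := sub_backward G fst snd hends hR
      exact ⟨C, by omega, hC⟩
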